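/- Let X be a nonempty set, Y a nonempty subset of X, and f ∈ T̄(X,Y). Then f is unit-regular in T̄(X,Y) if and only if the following three conditions hold: (i) f↾Y is unit-regular in T(Y); (ii) the range of f↾Y equals Y ∩ f(X), i.e. f(Y) = Y ∩ f(X); (iii) there exist a transversal T_f of ker(f) and a transversal T' of ker(f↾Y) with T' = Y ∩ T_f such that the cardinality of (X \ T_f) \ (Y \ T') equals the cardinality of (X \ f(X)) \ (Y \ f(Y)). -/

import Mathlib

/-- An element `s` of a monoid is unit-regular if `s * u * s = s` for some unit `u`. -/
def IsUnitRegular {M : Type*} [Monoid M] (s : M) : Prop :=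
  ∃ u : Mˣ, s * (↑u : M) * s = s

/-- The monoid `T̄(X, Y)` of all self-maps of `X` leaving `Y` invariant. -/
def Tbar (X : Type*) (Y : Set X) : Submonoid (Function.End X) where
  carrier := {f | ∀ x ∈ Y, f x ∈ Y}
  one_mem' := fun x hx => hx
  mul_mem' := fun {f g} hf hg x hx => hf _ (hg x hx)

/-- The restriction `f↾Y : Y → Y` of `f` to an invariant subset `Y`. -/
def restrictEnd {X : Type*} {Y : Set X} (f : Function.End X) (hf : ∀ x ∈ Y, f x ∈ Y) :
    Function.End ↥Y := fun y => ⟨f ↑y, hf ↑y y.2⟩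

/-- `T` is a transversal of the equivalence relation `ker f = {(x,y) : f x = f y}`:
it contains exactly one element of each `ker f`-class. -/
def IsTransversal {X : Type*} (f : X → X) (T : Set X) : Prop :=
  ∀ x : X, ∃! t, t ∈ T ∧ f t = f x

/-- `T` is a transversal of the equivalence relation `ker (f↾Y)` on `Y`. -/
def IsTransversalOn {X : Type*} (f : X → X) (Y T : Set X) : Prop :=
  T ⊆ Y ∧ ∀ x ∈ Y, ∃! t, t ∈ T ∧ f t = f x

section Aux
attribute [local instance] Classical.propDecidable
variable {A : Type*} {g : A → A} {T : Set A}

noncomputable def tsel (h : IsTransversal g T) (x : A) : A := (h x).exists.choose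

lemma tsel_mem (h : IsTransversal g T) (x : A) : tsel h x ∈ T := (h x).exists.choose_spec.1
lemma tsel_eq (h : IsTransversal g T) (x : A) : g (tsel h x) = g x := (h x).exists.choose_spec.2
lemma tsel_unique (h : IsTransversal g T) {x t : A} (ht : t ∈ T) (hgt : g t = g x) :
    t = tsel h x := (h x).unique ⟨ht, hgt⟩ ⟨tsel_mem h x, tsel_eq h x⟩

variable {T₁ T₂ : Set A} (h₁ : IsTransversal g T₁) (h₂ : IsTransversal g T₂)

noncomputable def tswap (x : A) : A :=
  if x ∈ T₁ then tsel h₂ x else if x ∈ T₂ then tsel h₁ x else x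

lemma tswap_invol (x : A) : tswap h₁ h₂ (tswap h₁ h₂ x) = x := by
  by_cases h1 : x ∈ T₁
  · by_cases he : tsel h₂ x = x
    · simp only [tswap, if_pos h1, he]
    · have h2' : tsel h₂ x ∉ T₁ := by
        intro hc
        exact he (by rw [tsel_unique h₁ hc (tsel_eq h₂ x), ← tsel_unique h₁ h1 rfl])
      simp only [tswap, if_pos h1, if_neg h2', if_pos (tsel_mem h₂ x)]
      exact (tsel_unique h₁ h1 (tsel_eq h₂ x).symm).symm
  · by_cases h2 : x ∈ T₂
    · simp only [tswap, if_neg h1, if_pos h2, if_pos (tsel_mem h₁ x)]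
      exact (tsel_unique h₂ h2 (tsel_eq h₁ x).symm).symm
    · simp only [tswap, if_neg h1, if_neg h2]

lemma tswap_not_mem₂ {x : A} (hx : x ∉ T₁) : tswap h₁ h₂ x ∉ T₂ := by
  by_cases h2 : x ∈ T₂
  · simp only [tswap, if_neg hx, if_pos h2]
    intro hc
    have e : tsel h₁ x = x :=
      (tsel_unique h₂ hc (tsel_eq h₁ x)).trans (tsel_unique h₂ h2 rfl).symm
    exact hx (e ▸ tsel_mem h₁ x)
  · simpa only [tswap, if_neg hx, if_neg h2] using h2

lemma tswap_not_mem₁ {x : A} (hx : x ∉ T₂) : tswap h₁ h₂ x ∉ T₁ := by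
  by_cases h1 : x ∈ T₁
  · simp only [tswap, if_pos h1]
    intro hc
    have e : tsel h₂ x = x :=
      (tsel_unique h₁ hc (tsel_eq h₂ x)).trans (tsel_unique h₁ h1 rfl).symm
    exact hx (e ▸ tsel_mem h₂ x)
  · simpa only [tswap, if_neg h1, if_neg hx] using h1

noncomputable def tswapEquiv : ↥T₁ᶜ ≃ ↥T₂ᶜ where
  toFun a := ⟨tswap h₁ h₂ ↑a, tswap_not_mem₂ h₁ h₂ a.2⟩
  invFun b := ⟨tswap h₁ h₂ ↑b, tswap_not_mem₁ h₁ h₂ b.2⟩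
  left_inv a := Subtype.ext (tswap_invol h₁ h₂ ↑a)
  right_inv b := Subtype.ext (tswap_invol h₁ h₂ ↑b)

lemma mk_compl_transversal (h₁ : IsTransversal g T₁) (h₂ : IsTransversal g T₂) : Cardinal.mk ↥T₁ᶜ = Cardinal.mk ↥T₂ᶜ :=
  Cardinal.eq.mpr ⟨tswapEquiv h₁ h₂⟩

end Aux

section Main
attribute [local instance] Classical.propDecidable

variable {X : Type*}

/-- The canonical equivalence between the range of `f` and a transversal of `ker f`. -/
noncomputable def rangeEquiv (f : X → X) {Tf : Set X} (hTf : IsTransversal f Tf) :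
    ↥(Set.range f) ≃ ↥Tf where
  toFun z := ⟨tsel hTf z.2.choose, tsel_mem hTf _⟩
  invFun t := ⟨f ↑t, ⟨↑t, rfl⟩⟩
  left_inv z := Subtype.ext
    (show f (tsel hTf z.2.choose) = ↑z by rw [tsel_eq hTf]; exact z.2.choose_spec)
  right_inv t := Subtype.ext
    (tsel_unique hTf t.2 ((⟨↑t, rfl⟩ : (f ↑t : X) ∈ Set.range f).choose_spec).symm).symm

lemma rangeEquiv_fst (f : X → X) {Tf : Set X} (hTf : IsTransversal f Tf)
    (z : ↥(Set.range f)) : f ↑(rangeEquiv f hTf z) = ↑z := by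
  simp only [rangeEquiv, Equiv.coe_fn_mk]
  rw [tsel_eq hTf]; exact z.2.choose_spec

lemma rangeEquiv_symm_fst (f : X → X) {Tf : Set X} (hTf : IsTransversal f Tf)
    (t : ↥Tf) : ↑((rangeEquiv f hTf).symm t) = f ↑t := by
  simp only [rangeEquiv, Equiv.coe_fn_symm_mk]

/-- Glue three equivalences between pieces of `X` into a self-map of `X`. -/
noncomputable def pieceMap (A B A' B' : Set X) (e₁ : ↥A ≃ ↥A') (e₂ : ↥B ≃ ↥B')
    (e₃ : ↥(Aᶜ \ B) ≃ ↥(A'ᶜ \ B')) : X → X := fun x =>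
  if h : x ∈ A then ↑(e₁ ⟨x, h⟩)
  else if h2 : x ∈ B then ↑(e₂ ⟨x, h2⟩)
  else ↑(e₃ ⟨x, h, h2⟩)

lemma pieceMap_inv {A B A' B' : Set X} (e₁ : ↥A ≃ ↥A') (e₂ : ↥B ≃ ↥B')
    (e₃ : ↥(Aᶜ \ B) ≃ ↥(A'ᶜ \ B')) (hAB' : ∀ x ∈ B', x ∉ A') (x : X) :
    pieceMap A' B' A B e₁.symm e₂.symm e₃.symm (pieceMap A B A' B' e₁ e₂ e₃ x) = x := by
  unfold pieceMap
  by_cases h : x ∈ A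
  · rw [dif_pos h, dif_pos (e₁ ⟨x, h⟩).2, Subtype.coe_eta, Equiv.symm_apply_apply]
  · rw [dif_neg h]
    by_cases h2 : x ∈ B
    · rw [dif_pos h2, dif_neg (hAB' _ (e₂ ⟨x, h2⟩).2), dif_pos (e₂ ⟨x, h2⟩).2,
        Subtype.coe_eta, Equiv.symm_apply_apply]
    · rw [dif_neg h2, dif_neg (e₃ ⟨x, h, h2⟩).2.1, dif_neg (e₃ ⟨x, h, h2⟩).2.2]
      exact congrArg Subtype.val (e₃.symm_apply_apply ⟨x, h, h2⟩)

end Main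

theorem stmt1 {X : Type*} [Nonempty X] (Y : Set X) (hY : Y.Nonempty)
    (f : Function.End X) (hf : ∀ x ∈ Y, f x ∈ Y) :
    IsUnitRegular (⟨f, hf⟩ : Tbar X Y) ↔
      (IsUnitRegular (restrictEnd f hf) ∧
       f '' Y = Y ∩ Set.range f ∧
       ∃ Tf T' : Set X, IsTransversal f Tf ∧ IsTransversalOn f Y T' ∧ T' = Y ∩ Tf ∧
         Cardinal.mk ↥(Tfᶜ \ (Y \ T')) =
           Cardinal.mk ↥((Set.range f)ᶜ \ (Y \ f '' Y))) := by
  classical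
  constructor
  · rintro ⟨u, hu⟩
    set g : Function.End X := ((u : Tbar X Y) : Function.End X) with hgdef
    have hg : ∀ x ∈ Y, g x ∈ Y := (u : Tbar X Y).2
    set g' : Function.End X := ((↑u⁻¹ : Tbar X Y) : Function.End X) with hg'def
    have hg' : ∀ x ∈ Y, g' x ∈ Y := ((↑u⁻¹ : Tbar X Y)).2
    have hgg' : ∀ x, g (g' x) = x := fun x =>
      congrFun (congrArg Subtype.val u.mul_inv) x
    have hg'g : ∀ x, g' (g x) = x := fun x =>
      congrFun (congrArg Subtype.val u.inv_mul) x
    have hfgf : ∀ x, f (g (f x)) = f x := fun x =>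
      congrFun (congrArg Subtype.val hu) x
    have hginj : Function.Injective g := fun a b h => by
      rw [← hg'g a, h, hg'g]
    have hgbij : Function.Bijective g := ⟨hginj, fun x => ⟨g' x, hgg' x⟩⟩
    have himg : f '' Y = Y ∩ Set.range f := by
      ext x
      constructor
      · rintro ⟨z, hz, rfl⟩
        exact ⟨hf z hz, ⟨z, rfl⟩⟩
      · rintro ⟨hxY, ⟨z, rfl⟩⟩
        exact ⟨g (f z), hg _ hxY, hfgf z⟩
    refine ⟨?_, himg, g '' Set.range f, Y ∩ g '' Set.range f, ?_, ?_, rfl, ?_⟩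
    · -- unit-regularity of the restriction
      refine ⟨⟨restrictEnd g hg, restrictEnd g' hg', ?_, ?_⟩, ?_⟩
      · funext a; exact Subtype.ext (hgg' ↑a)
      · funext a; exact Subtype.ext (hg'g ↑a)
      · funext a; exact Subtype.ext (hfgf ↑a)
    · -- Tf is a transversal
      intro x
      refine ⟨g (f x), ⟨⟨f x, ⟨x, rfl⟩, rfl⟩, hfgf x⟩, ?_⟩
      rintro t ⟨⟨z, ⟨a, rfl⟩, rfl⟩, ht⟩
      have : f a = f x := (hfgf a).symm.trans ht
      rw [this]
    · -- T' is a transversal on Y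
      refine ⟨Set.inter_subset_left, fun x hx => ?_⟩
      refine ⟨g (f x), ⟨⟨hg _ (hf x hx), ⟨f x, ⟨x, rfl⟩, rfl⟩⟩, hfgf x⟩, ?_⟩
      rintro t ⟨⟨htY, ⟨z, ⟨a, rfl⟩, rfl⟩⟩, ht⟩
      have : f a = f x := (hfgf a).symm.trans ht
      rw [this]
    · -- cardinality condition
      have hgY : g '' Y = Y := Set.Subset.antisymm
        (fun y ⟨z, hz, he⟩ => he ▸ hg z hz)
        (fun y hy => ⟨g' y, hg' y hy, hgg' y⟩)
      have key : g '' ((Set.range f)ᶜ \ (Y \ f '' Y)) =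
          (g '' Set.range f)ᶜ \ (Y \ (Y ∩ g '' Set.range f)) := by
        rw [Set.image_diff hginj, Set.image_compl_eq hgbij, Set.image_diff hginj, hgY,
          himg, Set.image_inter hginj, hgY]
      rw [← key, Cardinal.mk_image_eq hginj]
  · rintro ⟨⟨w, hw⟩, hii, Tf, T', hTf, hT', hT'eq, hcard⟩
    -- abbreviations
    have hvv' : ∀ a, (↑w : Function.End ↥Y) ((↑w⁻¹ : Function.End ↥Y) a) = a :=
      fun a => congrFun w.mul_inv a
    have hv'v : ∀ a, (↑w⁻¹ : Function.End ↥Y) ((↑w : Function.End ↥Y) a) = a :=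
      fun a => congrFun w.inv_mul a
    have hrwr : ∀ a, restrictEnd f hf ((↑w : Function.End ↥Y) (restrictEnd f hf a)) =
        restrictEnd f hf a := fun a => congrFun hw a
    have hvbij : Function.Bijective (↑w : Function.End ↥Y) :=
      ⟨fun a b h => by rw [← hv'v a, h, hv'v], fun a => ⟨_, hvv' a⟩⟩
    -- the image of the range under w is a transversal of ker (f↾Y)
    have hS : IsTransversal (restrictEnd f hf)
        ((↑w : Function.End ↥Y) '' Set.range (restrictEnd f hf)) := by
      intro a
      refine ⟨(↑w : Function.End ↥Y) (restrictEnd f hf a),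
        ⟨⟨restrictEnd f hf a, ⟨a, rfl⟩, rfl⟩, hrwr a⟩, ?_⟩
      rintro t ⟨⟨z, ⟨b, rfl⟩, rfl⟩, ht⟩
      have : restrictEnd f hf b = restrictEnd f hf a := (hrwr b).symm.trans ht
      rw [this]
    -- T' induces a transversal of ker (f↾Y)
    have hTsub : IsTransversal (restrictEnd f hf) (Subtype.val ⁻¹' T' : Set ↥Y) := by
      intro a
      obtain ⟨t, ⟨ht', hft⟩, huniq⟩ := hT'.2 ↑a a.2
      refine ⟨⟨t, hT'.1 ht'⟩, ⟨ht', Subtype.ext hft⟩, ?_⟩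
      rintro b ⟨hb, hrb⟩
      exact Subtype.ext (huniq ↑b ⟨hb, Subtype.ext_iff.mp hrb⟩)
    have hmk1 : Cardinal.mk ↥(Set.range (restrictEnd f hf))ᶜ =
        Cardinal.mk ↥((↑w : Function.End ↥Y) '' Set.range (restrictEnd f hf))ᶜ := by
      rw [← Set.image_compl_eq hvbij, Cardinal.mk_image_eq hvbij.injective]
    have hmk2 := mk_compl_transversal hS hTsub
    have hr0 : Set.range (restrictEnd f hf) = (Subtype.val ⁻¹' (f '' Y) : Set ↥Y) := by
      ext a
      constructor
      · rintro ⟨b, rfl⟩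
        exact ⟨↑b, b.2, rfl⟩
      · rintro ⟨z, hz, hfz⟩
        exact ⟨⟨z, hz⟩, Subtype.ext hfz⟩
    have eY : ∀ s : Set X, Cardinal.mk ↥(Subtype.val ⁻¹' sᶜ : Set ↥Y) =
        Cardinal.mk ↥(Y \ s) := by
      intro s
      exact Cardinal.eq.mpr ⟨⟨fun a => ⟨↑↑a, (↑a : ↥Y).2, by exact a.2⟩,
        fun x => ⟨⟨↑x, x.2.1⟩, by exact x.2.2⟩, fun a => rfl, fun x => rfl⟩⟩
    have hmk : Cardinal.mk ↥(Y \ f '' Y) = Cardinal.mk ↥(Y \ T') := by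
      rw [← eY (f '' Y), ← eY T']
      have h1 : (Subtype.val ⁻¹' (f '' Y)ᶜ : Set ↥Y) = (Set.range (restrictEnd f hf))ᶜ := by
        rw [Set.preimage_compl, ← hr0]
      rw [h1, hmk1, hmk2, ← Set.preimage_compl]
    obtain ⟨e₂⟩ := Cardinal.eq.mp hmk
    obtain ⟨e₃⟩ := Cardinal.eq.mp hcard.symm
    have hAB' : ∀ x ∈ Y \ T', x ∉ Tf := fun x hx hc => hx.2 (hT'eq ▸ ⟨hx.1, hc⟩)
    have hAB : ∀ x ∈ Y \ f '' Y, x ∉ Set.range f := fun x hx hc => hx.2 (hii ▸ ⟨hx.1, hc⟩)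
    have hg'g : ∀ x, pieceMap Tf (Y \ T') (Set.range f) (Y \ f '' Y)
        (rangeEquiv f hTf).symm e₂.symm e₃.symm
        (pieceMap (Set.range f) (Y \ f '' Y) Tf (Y \ T') (rangeEquiv f hTf) e₂ e₃ x) = x :=
      pieceMap_inv (rangeEquiv f hTf) e₂ e₃ hAB'
    have hgg' : ∀ x, pieceMap (Set.range f) (Y \ f '' Y) Tf (Y \ T') (rangeEquiv f hTf) e₂ e₃
        (pieceMap Tf (Y \ T') (Set.range f) (Y \ f '' Y)
          (rangeEquiv f hTf).symm e₂.symm e₃.symm x) = x := by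
      intro x
      have := pieceMap_inv (rangeEquiv f hTf).symm e₂.symm e₃.symm hAB x
      simpa only [Equiv.symm_symm] using this
    have hgY : ∀ y ∈ Y, pieceMap (Set.range f) (Y \ f '' Y) Tf (Y \ T')
        (rangeEquiv f hTf) e₂ e₃ y ∈ Y := by
      intro y hy
      unfold pieceMap
      by_cases h : y ∈ Set.range f
      · rw [dif_pos h]
        obtain ⟨y₀, hy₀Y, hfy₀⟩ : y ∈ f '' Y := by rw [hii]; exact ⟨hy, h⟩
        obtain ⟨t, ⟨ht', hft⟩, -⟩ := hT'.2 y₀ hy₀Y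
        have ht : t = ↑(rangeEquiv f hTf ⟨y, h⟩) :=
          (hTf y₀).unique ⟨(hT'eq ▸ ht' : t ∈ Y ∩ Tf).2, hft⟩
            ⟨(rangeEquiv f hTf ⟨y, h⟩).2, by rw [rangeEquiv_fst f hTf ⟨y, h⟩]; exact hfy₀.symm⟩
        rw [← ht]
        exact hT'.1 ht'
      · rw [dif_neg h]
        have h2 : y ∈ Y \ f '' Y := ⟨hy, fun hc => h ((hii ▸ hc : y ∈ Y ∩ Set.range f).2)⟩
        rw [dif_pos h2]
        exact (e₂ ⟨y, h2⟩).2.1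
    have hg'Y : ∀ y ∈ Y, pieceMap Tf (Y \ T') (Set.range f) (Y \ f '' Y)
        (rangeEquiv f hTf).symm e₂.symm e₃.symm y ∈ Y := by
      intro y hy
      unfold pieceMap
      by_cases h : y ∈ Tf
      · rw [dif_pos h]
        exact hf y hy
      · rw [dif_neg h]
        have h2 : y ∈ Y \ T' := ⟨hy, fun hc => h ((hT'eq ▸ hc : y ∈ Y ∩ Tf).2)⟩
        rw [dif_pos h2]
        exact (e₂.symm ⟨y, h2⟩).2.1
    refine ⟨⟨⟨pieceMap (Set.range f) (Y \ f '' Y) Tf (Y \ T') (rangeEquiv f hTf) e₂ e₃, hgY⟩,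
      ⟨pieceMap Tf (Y \ T') (Set.range f) (Y \ f '' Y)
        (rangeEquiv f hTf).symm e₂.symm e₃.symm, hg'Y⟩, ?_, ?_⟩, ?_⟩
    · exact Subtype.ext (funext hgg')
    · exact Subtype.ext (funext hg'g)
    · apply Subtype.ext
      funext x
      show f (pieceMap (Set.range f) (Y \ f '' Y) Tf (Y \ T')
        (rangeEquiv f hTf) e₂ e₃ (f x)) = f x
      unfold pieceMap
      exact (congrArg f (dif_pos (Set.mem_range_self x))).trans (rangeEquiv_fst f hTf ⟨f x, Set.mem_range_self x⟩)
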